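/- arXiv:1806.05546 — 4 statements merged into one kernel-verified Lean document; each statement's English description precedes it below -/
import Mathlib

section
/- At every point f ∈ ℂ^N at which all entries of Af are nonzero (i.e., (Af)_m ≠ 0 for m = 1,…,M), the amplitude loss L, viewed as a real-differentiable function of the real and imaginary parts of f (ℂ^N ≅ ℝ^{2N} with real inner product Re⟨·,·⟩), is differentiable at f, and its gradient, identified with an element of ℂ^N, equals 2·G(f) = 2·A^H(Af − b ⊙ sgn(Af)). -/
open scoped BigOperators
open Matrix

noncomputable section

namespace AWF

/-- Complex signum: `z/|z|` for `z ≠ 0`, and `0` at `0`. -/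
def csgn (z : ℂ) : ℂ := if z = 0 then 0 else z / (‖z‖ : ℂ)

variable {M N : ℕ}

/-- Amplitude loss `L(f) = ∑ (b_m − |(Af)_m|)²`. -/
def ampLoss (A : Matrix (Fin M) (Fin N) ℂ) (b : Fin M → ℝ) (f : Fin N → ℂ) : ℝ :=
  ∑ m, (b m - ‖A.mulVec f m‖) ^ 2

/-- Generalized (Wirtinger) gradient `G(f) = Aᴴ(Af − b ⊙ sgn(Af))`. -/
def wGrad (A : Matrix (Fin M) (Fin N) ℂ) (b : Fin M → ℝ) (f : Fin N → ℂ) : Fin N → ℂ :=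
  Aᴴ.mulVec (fun m => A.mulVec f m - (b m : ℂ) * csgn (A.mulVec f m))

/-- Euclidean (ℓ₂) norm of a complex vector. -/
def norm2 {n : ℕ} (v : Fin n → ℂ) : ℝ := Real.sqrt (∑ i, ‖v i‖ ^ 2)

/-- The largest eigenvalue of the positive semidefinite Hermitian matrix `Aᴴ A`. -/
def lamMax (A : Matrix (Fin M) (Fin N) ℂ) : ℝ :=
  ⨆ i, (Matrix.isHermitian_conjTranspose_mul_self A).eigenvalues i

end AWF

namespace AWF

private lemma hasFDerivAt_cabs (z : ℂ) (hz : z ≠ 0) :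
    HasFDerivAt (fun w : ℂ => ‖w‖) ((‖z‖)⁻¹ • innerSL ℝ z) z := by
  have h1 : HasFDerivAt (fun w : ℂ => ‖w‖ ^ 2) (2 • innerSL ℝ z) z := by
    simpa using (hasFDerivAt_id z).norm_sq
  have h2 : HasDerivAt Real.sqrt (1 / (2 * Real.sqrt (‖z‖ ^ 2))) (‖z‖ ^ 2) :=
    Real.hasDerivAt_sqrt (pow_ne_zero 2 (norm_ne_zero_iff.2 hz))
  have := h2.comp_hasFDerivAt z h1
  have e : (fun w : ℂ => ‖w‖) = Real.sqrt ∘ fun w => ‖w‖ ^ 2 := by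
    ext w
    simp [Real.sqrt_sq (norm_nonneg w)]
  rw [e]
  refine this.congr_fderiv ?_
  · ext w
    have hz' : ‖z‖ ≠ 0 := by simpa using hz
    simp [Real.sqrt_sq (norm_nonneg z), smul_smul]
    ring

/-- the `m`-th entry of `A · v` as a real-continuous-linear map. -/
private def mvCLM (A : Matrix (Fin M) (Fin N) ℂ) (m : Fin M) : (Fin N → ℂ) →L[ℝ] ℂ :=
  LinearMap.toContinuousLinearMap
    (((LinearMap.proj m : (Fin M → ℂ) →ₗ[ℂ] ℂ).comp A.mulVecLin).restrictScalars ℝ)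

private lemma mvCLM_apply (A : Matrix (Fin M) (Fin N) ℂ) (m : Fin M) (v : Fin N → ℂ) :
    mvCLM A m v = A.mulVec v m := rfl

set_option synthInstance.maxHeartbeats 1000000 in
set_option maxHeartbeats 1000000 in
/-- At every `f` with all entries of `Af` nonzero, the amplitude loss `L`
is (real-)differentiable at `f`, and its gradient with respect to the real inner product
`Re⟨u,v⟩ = Re(∑ conj(u_n) v_n)` is `2·G(f)`. -/
theorem ampLoss_hasGradient
    {M N : ℕ} (A : Matrix (Fin M) (Fin N) ℂ) (b : Fin M → ℝ) (hb : ∀ m, 0 ≤ b m)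
    (f : Fin N → ℂ) (hf : ∀ m, A.mulVec f m ≠ 0) :
    ∃ φ : (Fin N → ℂ) →L[ℝ] ℝ,
      HasFDerivAt (ampLoss A b) φ f ∧
        ∀ v : Fin N → ℂ,
          φ v = (∑ n, (starRingEnd ℂ) (2 * wGrad A b f n) * v n).re := by
  classical
  -- derivative of each summand
  have hterm : ∀ m : Fin M,
      HasFDerivAt (fun g : Fin N → ℂ => (b m - ‖A.mulVec g m‖) ^ 2)
        ((2 * (b m - ‖A.mulVec f m‖) * (-1)) •
          (((‖A.mulVec f m‖)⁻¹ • innerSL ℝ (A.mulVec f m)).comp (mvCLM A m))) f := by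
    intro m
    have habs : HasFDerivAt (fun g : Fin N → ℂ => ‖A.mulVec g m‖)
        (((‖A.mulVec f m‖)⁻¹ • innerSL ℝ (A.mulVec f m)).comp (mvCLM A m)) f :=
      (hasFDerivAt_cabs (A.mulVec f m) (hf m)).comp f (mvCLM A m).hasFDerivAt
    have hg : HasDerivAt (fun u : ℝ => (b m - u) ^ 2)
        (2 * (b m - ‖A.mulVec f m‖) * (-1)) (‖A.mulVec f m‖) := by
      have := (((hasDerivAt_id (‖A.mulVec f m‖)).const_sub (b m)).pow 2)
      simpa [Pi.pow_def] using this
    exact hg.comp_hasFDerivAt f habs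
  refine ⟨∑ m, (2 * (b m - ‖A.mulVec f m‖) * (-1)) •
      (((‖A.mulVec f m‖)⁻¹ • innerSL ℝ (A.mulVec f m)).comp (mvCLM A m)), ?_, ?_⟩
  · have := HasFDerivAt.sum (fun m (_ : m ∈ Finset.univ) => hterm m)
    show HasFDerivAt (fun g => ∑ m, (b m - ‖A.mulVec g m‖) ^ 2) _ f
    simpa [Finset.sum_fn] using this
  · intro v
    -- rewrite the RHS as a sum over m
    have hR : (∑ n, (starRingEnd ℂ) (2 * wGrad A b f n) * v n)
        = ∑ m, 2 * (starRingEnd ℂ) (A.mulVec f m - (b m : ℂ) * csgn (A.mulVec f m)) * A.mulVec v m := by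
      simp only [wGrad, Matrix.mulVec, dotProduct, Matrix.conjTranspose_apply,
        map_sub, _root_.map_mul, map_sum, map_ofNat, Complex.conj_conj, Complex.star_def,
        Finset.mul_sum, Finset.sum_mul]
      rw [Finset.sum_comm]
      exact Finset.sum_congr rfl fun m _ => Finset.sum_congr rfl fun n _ => by ring
    rw [hR, Complex.re_sum]
    simp only [ContinuousLinearMap.sum_apply, ContinuousLinearMap.smul_apply,
      ContinuousLinearMap.coe_comp', Function.comp_apply, mvCLM_apply,
      innerSL_apply_apply, smul_eq_mul]
    refine Finset.sum_congr rfl fun m _ => ?_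
    have hzm := hf m
    have hr : ‖A.mulVec f m‖ ≠ 0 := by simpa using hzm
    have hinner : (inner ℝ (A.mulVec f m) (A.mulVec v m) : ℝ)
        = ((starRingEnd ℂ) (A.mulVec f m) * A.mulVec v m).re := by rw [Complex.inner, mul_comm]
    have hconj : 2 * (starRingEnd ℂ) (A.mulVec f m - (b m : ℂ) * csgn (A.mulVec f m)) * A.mulVec v m
        = ((2 * (‖A.mulVec f m‖ - b m) / ‖A.mulVec f m‖ : ℝ) : ℂ) *
          ((starRingEnd ℂ) (A.mulVec f m) * A.mulVec v m) := by
      rw [csgn, if_neg hzm, map_sub, _root_.map_mul, map_div₀, Complex.conj_ofReal,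
        Complex.conj_ofReal]
      have hrc : ((‖A.mulVec f m‖ : ℝ) : ℂ) ≠ 0 := Complex.ofReal_ne_zero.mpr hr
      push_cast
      field_simp
    rw [hinner, hconj, Complex.re_ofReal_mul]
    field_simp
    ring


end AWF
end
end

section
/- For every ε > 0, every f, u ∈ ℂ^N, and every t ∈ ℝ, the function φ(t) = L_ε(f + t·u) is twice differentiable in t and its second derivative satisfies φ''(t) ≤ 2·‖A‖²·‖u‖₂², where ‖A‖ is the operator (spectral) norm of A. -/
open scoped BigOperators
open Matrix

noncomputable section

namespace AWF

variable {M N : ℕ}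

/-- Smoothed amplitude loss `L_ε(f) = ∑ (√(|(Af)_m|² + ε) − b_m)²`. -/
def smLoss (A : Matrix (Fin M) (Fin N) ℂ) (b : Fin M → ℝ) (ε : ℝ) (f : Fin N → ℂ) : ℝ :=
  ∑ m, (Real.sqrt (‖A.mulVec f m‖ ^ 2 + ε) - b m) ^ 2

/-- Wirtinger gradient of the smoothed loss:
`g_ε(f) = ∑_m (1 − b_m/√(|(Af)_m|²+ε)) (a_m a_mᴴ) f`, where `a_mᴴ` is the `m`-th row of `A`. -/
def smGrad (A : Matrix (Fin M) (Fin N) ℂ) (b : Fin M → ℝ) (ε : ℝ) (f : Fin N → ℂ) :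
    Fin N → ℂ := fun n =>
  ∑ m, (((1 - b m / Real.sqrt (‖A.mulVec f m‖ ^ 2 + ε)) : ℝ) : ℂ)
      * (star (A m n) * A.mulVec f m)

end AWF

namespace AWF

/-- The ℓ²→ℓ² operator (spectral) norm of a matrix. -/
def opNorm {M N : ℕ} (A : Matrix (Fin M) (Fin N) ℂ) : ℝ :=
  ‖LinearMap.toContinuousLinearMap (Matrix.toEuclideanLin A)‖

end AWF

namespace AWF

def Qf (α β p q ε t : ℝ) : ℝ := (α + t*p)^2 + (β + t*q)^2 + ε
def Q1f (α β p q t : ℝ) : ℝ := 2*(α + t*p)*p + 2*(β + t*q)*q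

lemma Qf_pos {ε : ℝ} (hε : 0 < ε) (α β p q t : ℝ) : 0 < Qf α β p q ε t := by
  unfold Qf; positivity

lemma hasDerivAt_Qf (α β p q ε t : ℝ) :
    HasDerivAt (fun t => Qf α β p q ε t) (Q1f α β p q t) t := by
  have h1 : HasDerivAt (fun t : ℝ => α + t*p) p t := by
    simpa using ((hasDerivAt_id t).mul_const p).const_add α
  have h2 : HasDerivAt (fun t : ℝ => β + t*q) q t := by
    simpa using ((hasDerivAt_id t).mul_const q).const_add β
  have := ((h1.pow 2).add (h2.pow 2)).add_const ε
  exact this.congr_deriv (by unfold Q1f; ring)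

lemma hasDerivAt_Q1f (α β p q t : ℝ) :
    HasDerivAt (fun t => Q1f α β p q t) (2*(p^2 + q^2)) t := by
  have h1 : HasDerivAt (fun t : ℝ => α + t*p) p t := by
    simpa using ((hasDerivAt_id t).mul_const p).const_add α
  have h2 : HasDerivAt (fun t : ℝ => β + t*q) q t := by
    simpa using ((hasDerivAt_id t).mul_const q).const_add β
  have := ((h1.const_mul 2).mul_const p).add ((h2.const_mul 2).mul_const q)
  exact this.congr_deriv (by ring)

lemma hasDerivAt_sqrtQf {ε : ℝ} (hε : 0 < ε) (α β p q t : ℝ) :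
    HasDerivAt (fun t => Real.sqrt (Qf α β p q ε t))
      (Q1f α β p q t / (2 * Real.sqrt (Qf α β p q ε t))) t := by
  have h := (Real.hasDerivAt_sqrt (ne_of_gt (Qf_pos hε α β p q t))).comp t
    (hasDerivAt_Qf α β p q ε t)
  exact h.congr_deriv (by ring)

lemma hasDerivAt_psi {ε b : ℝ} (hε : 0 < ε) (α β p q t : ℝ) :
    HasDerivAt (fun t => (Real.sqrt (Qf α β p q ε t) - b)^2)
      ((1 - b / Real.sqrt (Qf α β p q ε t)) * Q1f α β p q t) t := by
  have hs : (0:ℝ) < Real.sqrt (Qf α β p q ε t) := Real.sqrt_pos.2 (Qf_pos hε α β p q t)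
  have h := ((hasDerivAt_sqrtQf hε α β p q t).sub_const b).pow 2
  exact h.congr_deriv (by field_simp; ring)

lemma hasDerivAt_psi' {ε b : ℝ} (hε : 0 < ε) (α β p q t : ℝ) :
    HasDerivAt (fun t => (1 - b / Real.sqrt (Qf α β p q ε t)) * Q1f α β p q t)
      ((1 - b / Real.sqrt (Qf α β p q ε t)) * (2*(p^2+q^2))
        + b * (Q1f α β p q t)^2 / (2 * Real.sqrt (Qf α β p q ε t)^3)) t := by
  have hs : (0:ℝ) < Real.sqrt (Qf α β p q ε t) := Real.sqrt_pos.2 (Qf_pos hε α β p q t)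
  have hdiv : HasDerivAt (fun t => b / Real.sqrt (Qf α β p q ε t))
      ((0 * Real.sqrt (Qf α β p q ε t) - b * (Q1f α β p q t / (2 * Real.sqrt (Qf α β p q ε t))))
        / Real.sqrt (Qf α β p q ε t)^2) t :=
    (hasDerivAt_const t b).div (hasDerivAt_sqrtQf hε α β p q t) (ne_of_gt hs)
  have h := ((hdiv.const_sub 1).mul (hasDerivAt_Q1f α β p q t))
  exact h.congr_deriv (by field_simp; ring)

lemma psi''_le {ε b : ℝ} (hε : 0 < ε) (hb : 0 ≤ b) (α β p q t : ℝ) :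
    (1 - b / Real.sqrt (Qf α β p q ε t)) * (2*(p^2+q^2))
      + b * (Q1f α β p q t)^2 / (2 * Real.sqrt (Qf α β p q ε t)^3) ≤ 2*(p^2+q^2) := by
  set s := Real.sqrt (Qf α β p q ε t) with hsdef
  have hQpos := Qf_pos hε α β p q t
  have hs : (0:ℝ) < s := Real.sqrt_pos.2 hQpos
  have hs2 : s^2 = Qf α β p q ε t := Real.sq_sqrt hQpos.le
  have hCS : (Q1f α β p q t)^2 ≤ 2*(2*(p^2+q^2)) * s^2 := by
    rw [hs2]
    unfold Qf Q1f
    nlinarith [sq_nonneg ((α + t*p)*q - (β + t*q)*p), sq_nonneg (α + t*p), sq_nonneg (β + t*q), hε.le]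
  have key : b * (Q1f α β p q t)^2 / (2 * s^3) ≤ b * (2*(p^2+q^2)) / s := by
    rw [div_le_div_iff₀ (by positivity) hs]
    have : b * (Q1f α β p q t)^2 ≤ b * (2*(2*(p^2+q^2)) * s^2) :=
      mul_le_mul_of_nonneg_left hCS hb
    nlinarith [this, hs, sq_nonneg s]
  have expand : (1 - b / s) * (2*(p^2+q^2)) = 2*(p^2+q^2) - b * (2*(p^2+q^2)) / s := by ring
  linarith [key]

lemma mulVec_sq_sum_le {M N : ℕ} (A : Matrix (Fin M) (Fin N) ℂ) (u : Fin N → ℂ) :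
    ∑ m, ‖A.mulVec u m‖^2 ≤ opNorm A ^ 2 * ∑ n, ‖u n‖^2 := by
  have h1 : ‖(LinearMap.toContinuousLinearMap (Matrix.toEuclideanLin A))
      ((WithLp.equiv 2 (Fin N → ℂ)).symm u)‖
      ≤ opNorm A * ‖(WithLp.equiv 2 (Fin N → ℂ)).symm u‖ :=
    ContinuousLinearMap.le_opNorm _ _
  have h2 : (LinearMap.toContinuousLinearMap (Matrix.toEuclideanLin A))
      ((WithLp.equiv 2 (Fin N → ℂ)).symm u)
      = (WithLp.equiv 2 (Fin M → ℂ)).symm (A.mulVec u) := by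
    rw [LinearMap.coe_toContinuousLinearMap']
    exact Matrix.toEuclideanLin_apply_piLp_toLp A u
  rw [h2] at h1
  have hnv : ‖(WithLp.equiv 2 (Fin N → ℂ)).symm u‖ = Real.sqrt (∑ n, ‖u n‖^2) := by
    rw [EuclideanSpace.norm_eq]; rfl
  have hnLv : ‖(WithLp.equiv 2 (Fin M → ℂ)).symm (A.mulVec u)‖
      = Real.sqrt (∑ m, ‖A.mulVec u m‖^2) := by
    rw [EuclideanSpace.norm_eq]; rfl
  rw [hnv, hnLv] at h1
  have hsq := pow_le_pow_left₀ (Real.sqrt_nonneg _) h1 2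
  have hnn1 : (0:ℝ) ≤ ∑ m, ‖A.mulVec u m‖^2 :=
    Finset.sum_nonneg fun m _ => pow_nonneg (norm_nonneg _) 2
  have hnn2 : (0:ℝ) ≤ ∑ n, ‖u n‖^2 :=
    Finset.sum_nonneg fun n _ => pow_nonneg (norm_nonneg _) 2
  rw [Real.sq_sqrt hnn1, mul_pow, Real.sq_sqrt hnn2] at hsq
  exact hsq


end AWF

namespace AWF

/-- For every `ε > 0`, `f`, `u`, the function `φ(t) = L_ε(f + t u)` is
twice differentiable on ℝ with `φ''(t) ≤ 2 ‖A‖² ‖u‖₂²`. -/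
theorem smLoss_line_second_deriv_bound
    {M N : ℕ} (A : Matrix (Fin M) (Fin N) ℂ) (b : Fin M → ℝ) (hb : ∀ m, 0 ≤ b m)
    (ε : ℝ) (hε : 0 < ε) (f u : Fin N → ℂ) :
    ∃ φ' φ'' : ℝ → ℝ,
      (∀ t : ℝ, HasDerivAt (fun s : ℝ => smLoss A b ε (f + s • u)) (φ' t) t) ∧
      (∀ t : ℝ, HasDerivAt φ' (φ'' t) t) ∧
      (∀ t : ℝ, φ'' t ≤ 2 * opNorm A ^ 2 * ∑ n, ‖u n‖ ^ 2) := by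
  set c : Fin M → ℂ := A.mulVec f with hc
  set d : Fin M → ℂ := A.mulVec u with hd
  have hfun : ∀ s : ℝ, smLoss A b ε (f + s • u)
      = ∑ m, (Real.sqrt (Qf (c m).re (c m).im (d m).re (d m).im ε s) - b m)^2 := by
    intro s
    unfold smLoss
    refine Finset.sum_congr rfl fun m _ => ?_
    have hms : A.mulVec (f + s • u) m = c m + (s:ℂ) * d m := by
      have hv : f + s • u = f + (s:ℂ) • u := by
        ext n; simp [Complex.real_smul]
      rw [hv, Matrix.mulVec_add, Matrix.mulVec_smul]
      simp [hc, hd]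
    rw [hms]
    congr 2
    unfold Qf
    rw [Complex.sq_norm, Complex.normSq_apply]
    simp only [Complex.add_re, Complex.add_im, Complex.mul_re, Complex.mul_im,
      Complex.ofReal_re, Complex.ofReal_im]
    ring
  refine ⟨fun t => ∑ m, (1 - b m / Real.sqrt (Qf (c m).re (c m).im (d m).re (d m).im ε t))
      * Q1f (c m).re (c m).im (d m).re (d m).im t,
    fun t => ∑ m, ((1 - b m / Real.sqrt (Qf (c m).re (c m).im (d m).re (d m).im ε t))
        * (2*((d m).re^2+(d m).im^2))
      + b m * (Q1f (c m).re (c m).im (d m).re (d m).im t)^2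
        / (2 * Real.sqrt (Qf (c m).re (c m).im (d m).re (d m).im ε t)^3)),
    ?_, ?_, ?_⟩
  · intro t
    have heq : (fun s : ℝ => smLoss A b ε (f + s • u))
        = fun s => ∑ m, (Real.sqrt (Qf (c m).re (c m).im (d m).re (d m).im ε s) - b m)^2 :=
      funext hfun
    rw [heq]
    exact HasDerivAt.fun_sum fun m _ => hasDerivAt_psi hε _ _ _ _ t
  · intro t
    exact HasDerivAt.fun_sum fun m _ => hasDerivAt_psi' hε _ _ _ _ t
  · intro t
    have h1 : ∀ m ∈ Finset.univ, (1 - b m / Real.sqrt (Qf (c m).re (c m).im (d m).re (d m).im ε t))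
        * (2*((d m).re^2+(d m).im^2))
      + b m * (Q1f (c m).re (c m).im (d m).re (d m).im t)^2
        / (2 * Real.sqrt (Qf (c m).re (c m).im (d m).re (d m).im ε t)^3)
        ≤ 2*((d m).re^2+(d m).im^2) := fun m _ => psi''_le hε (hb m) _ _ _ _ t
    refine le_trans (Finset.sum_le_sum h1) ?_
    have hnorm : ∀ m, (d m).re^2 + (d m).im^2 = ‖d m‖^2 := by
      intro m
      rw [Complex.sq_norm, Complex.normSq_apply]
      ring
    have hA := mulVec_sq_sum_le A u
    rw [← hd] at hA
    calc ∑ m, 2*((d m).re^2+(d m).im^2) = 2 * ∑ m, ‖d m‖^2 := by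
          rw [Finset.mul_sum]
          exact Finset.sum_congr rfl fun m _ => by rw [hnorm m]
      _ ≤ 2 * (opNorm A ^2 * ∑ n, ‖u n‖^2) := by linarith [hA]
      _ = 2 * opNorm A ^2 * ∑ n, ‖u n‖^2 := by ring

end AWF
end
end

section
/- For every ε > 0 and every f ∈ ℂ^N, one Wirtinger gradient step with step size μ̄ = 1/L̄ on the smoothed loss decreases it: L_ε(f − μ̄·g_ε(f)) ≤ L_ε(f) − μ̄·‖g_ε(f)‖₂², where L̄ = λmax(A^H A) is assumed positive. -/
open scoped BigOperators
open Matrix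

noncomputable section

namespace AWF

variable {M N : ℕ}

private lemma perM (ε : ℝ) (hε : 0 < ε) (bm : ℝ) (hbm : 0 ≤ bm) (y y' : ℂ) :
    (Real.sqrt (‖y'‖^2 + ε) - bm)^2 ≤ (Real.sqrt (‖y‖^2 + ε) - bm)^2
      + 2 * ((1 - bm / Real.sqrt (‖y‖^2 + ε)) * ((starRingEnd ℂ) y * (y' - y)).re)
      + ‖y' - y‖^2 := by
  set s := Real.sqrt (‖y‖^2 + ε) with hs
  set s' := Real.sqrt (‖y'‖^2 + ε) with hs'
  have hsp : 0 < s := Real.sqrt_pos.mpr (by positivity)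
  have hsp' : 0 < s' := Real.sqrt_pos.mpr (by positivity)
  have hs2 : s^2 = ‖y‖^2 + ε := Real.sq_sqrt (by positivity)
  have hs2' : s'^2 = ‖y'‖^2 + ε := Real.sq_sqrt (by positivity)
  have hre : ((starRingEnd ℂ) y * y').re ≤ ‖y‖ * ‖y'‖ := by
    calc ((starRingEnd ℂ) y * y').re ≤ ‖(starRingEnd ℂ) y * y'‖ := Complex.re_le_norm _
    _ = ‖y‖ * ‖y'‖ := by rw [norm_mul, Complex.norm_conj]
  have hkey : ((starRingEnd ℂ) y * y').re + ε ≤ s * s' := by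
    nlinarith [sq_nonneg (‖y‖ - ‖y'‖), sq_nonneg (s - s'), norm_nonneg y, norm_nonneg y',
      mul_pos hsp hsp', sq_nonneg (s*s' - ‖y‖*‖y'‖ - ε)]
  have hexp : ‖y' - y‖^2 = ‖y'‖^2 - 2 * ((starRingEnd ℂ) y * (y' - y)).re - ‖y‖^2 := by
    simp only [Complex.sq_norm, Complex.normSq_apply, Complex.mul_re,
      Complex.sub_re, Complex.sub_im, Complex.conj_re, Complex.conj_im]
    ring
  have hR : ((starRingEnd ℂ) y * (y' - y)).re = ((starRingEnd ℂ) y * y').re - ‖y‖^2 := by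
    simp only [Complex.sq_norm, Complex.normSq_apply, Complex.mul_re,
      Complex.sub_re, Complex.sub_im, Complex.conj_re, Complex.conj_im]
    ring
  have h2 : bm * s + (bm/s) * ((starRingEnd ℂ) y * (y' - y)).re ≤ bm * s' := by
    have h3 : (bm/s) * (((starRingEnd ℂ) y * y').re + ε) ≤ (bm/s) * (s*s') :=
      mul_le_mul_of_nonneg_left hkey (by positivity)
    rw [hR]
    have hss : (bm/s) * (s*s') = bm * s' := by field_simp
    have h5 : bm/s * (‖y‖^2 + ε) = bm * s := by rw [← hs2]; field_simp
    nlinarith [h3, h5]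
  nlinarith [h2, hexp, hs2, hs2']

private lemma dotSelf {K : ℕ} (w : Fin K → ℂ) : (star w ⬝ᵥ w).re = ∑ i, ‖w i‖^2 := by
  rw [dotProduct, Complex.re_sum]
  congr 1; ext i
  simp [Complex.mul_re, Complex.sq_norm, Complex.normSq_apply]

private lemma quadBound {M N : ℕ} (A : Matrix (Fin M) (Fin N) ℂ) (v : Fin N → ℂ) :
    ∑ m, ‖A.mulVec v m‖^2 ≤ lamMax A * ∑ n, ‖v n‖^2 := by
  unfold lamMax
  set hB := Matrix.isHermitian_conjTranspose_mul_self A with hBdef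
  set U : Matrix (Fin N) (Fin N) ℂ := (hB.eigenvectorUnitary : Matrix (Fin N) (Fin N) ℂ) with hU
  set c : Fin N → ℂ := star U *ᵥ v with hc
  have hUU : U * star U = 1 := (Matrix.mem_unitaryGroup_iff).mp hB.eigenvectorUnitary.2
  have hstarc : star c = star v ᵥ* U := by
    rw [hc, star_mulVec]
    rw [Matrix.star_eq_conjTranspose, conjTranspose_conjTranspose]
  have h1 : ∑ m, ‖A.mulVec v m‖^2 = (star v ⬝ᵥ ((Aᴴ * A) *ᵥ v)).re := by
    rw [← dotSelf (A.mulVec v)]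
    congr 1
    rw [star_mulVec, ← Matrix.dotProduct_mulVec, mulVec_mulVec]
  have h2 : star v ⬝ᵥ ((Aᴴ * A) *ᵥ v)
      = ∑ i, (hB.eigenvalues i : ℂ) * (star (c i) * c i) := by
    conv_lhs => rw [hB.spectral_theorem, Unitary.conjStarAlgAut_apply]
    rw [← mulVec_mulVec, ← mulVec_mulVec, Matrix.dotProduct_mulVec, ← hstarc, ← hc]
    rw [dotProduct]
    refine Finset.sum_congr rfl fun i _ => ?_
    simp [Matrix.mulVec_diagonal]
    ring
  have h3 : (star v ⬝ᵥ ((Aᴴ * A) *ᵥ v)).re = ∑ i, hB.eigenvalues i * ‖c i‖^2 := by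
    rw [h2, Complex.re_sum]
    refine Finset.sum_congr rfl fun i _ => ?_
    have : star (c i) * c i = ((‖c i‖^2 : ℝ) : ℂ) := by
      rw [mul_comm]
      simp [Complex.mul_conj, Complex.normSq_eq_norm_sq]
    rw [this, ← Complex.ofReal_mul, Complex.ofReal_re]
  have h4 : ∑ n, ‖c n‖^2 = ∑ n, ‖v n‖^2 := by
    rw [← dotSelf c, ← dotSelf v]
    congr 1
    conv_lhs => rw [hstarc, hc]
    rw [← Matrix.dotProduct_mulVec, mulVec_mulVec, hUU, one_mulVec]
  rw [h1, h3, ← h4, Finset.mul_sum]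
  refine Finset.sum_le_sum fun i _ => ?_
  exact mul_le_mul_of_nonneg_right
    (le_ciSup (Set.Finite.bddAbove (Set.finite_range _)) i) (by positivity)

private lemma gradId {M N : ℕ} (A : Matrix (Fin M) (Fin N) ℂ) (w : Fin M → ℝ) (y : Fin M → ℂ)
    (d : Fin N → ℂ) :
    ∑ m, ((w m : ℂ)) * ((starRingEnd ℂ) (y m) * (A.mulVec d m))
      = ∑ n, (starRingEnd ℂ) (∑ m, ((w m : ℂ)) * (star (A m n) * y m)) * d n := by
  have hrhs : ∀ n, (starRingEnd ℂ) (∑ m, ((w m : ℂ)) * (star (A m n) * y m)) * d n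
      = ∑ m, (w m : ℂ) * ((starRingEnd ℂ) (y m) * (A m n * d n)) := by
    intro n
    rw [map_sum, Finset.sum_mul]
    refine Finset.sum_congr rfl fun m _ => ?_
    simp only [_root_.map_mul, Complex.conj_ofReal, RCLike.star_def, Complex.conj_conj]
    ring
  rw [Finset.sum_congr rfl fun n _ => hrhs n, Finset.sum_comm]
  refine Finset.sum_congr rfl fun m _ => ?_
  have : A.mulVec d m = ∑ n, A m n * d n := rfl
  rw [this, Finset.mul_sum, Finset.mul_sum]

end AWF

namespace AWF

/-- One Wirtinger gradient step with step size `μ̄ = 1/λmax(AᴴA)`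
decreases the smoothed loss: `L_ε(f − μ̄ g_ε(f)) ≤ L_ε(f) − μ̄ ‖g_ε(f)‖₂²`. -/
theorem smLoss_descent_step
    {M N : ℕ} (A : Matrix (Fin M) (Fin N) ℂ) (b : Fin M → ℝ) (hb : ∀ m, 0 ≤ b m)
    (hpos : 0 < lamMax A) (ε : ℝ) (hε : 0 < ε) (f : Fin N → ℂ) :
    smLoss A b ε (f - (1 / lamMax A) • smGrad A b ε f)
      ≤ smLoss A b ε f - (1 / lamMax A) * norm2 (smGrad A b ε f) ^ 2 := by
  set L := lamMax A with hL
  set μ := 1 / L with hmu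
  have hμ : 0 < μ := one_div_pos.mpr hpos
  set g := smGrad A b ε f with hg
  set dd : Fin N → ℂ := -(μ • g) with hdd
  have hfd : f - μ • g = f + dd := by rw [hdd, sub_eq_add_neg]
  set S := ∑ n, ‖g n‖^2 with hS
  have hS0 : 0 ≤ S := Finset.sum_nonneg fun n _ => by positivity
  have hddn : ∀ n, dd n = -((μ:ℂ) * g n) := fun n => by
    simp [hdd, Complex.real_smul]
  have hddnorm : ∑ n, ‖dd n‖^2 = μ^2 * S := by
    rw [hS, Finset.mul_sum]
    refine Finset.sum_congr rfl fun n _ => ?_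
    rw [hddn n, norm_neg, norm_mul, Complex.norm_real, Real.norm_of_nonneg hμ.le, mul_pow]
  have hAfd : ∀ m, A.mulVec (f + dd) m = A.mulVec f m + A.mulVec dd m := by
    intro m; rw [Matrix.mulVec_add]; rfl
  set w : Fin M → ℝ := fun m => 1 - b m / Real.sqrt (‖A.mulVec f m‖^2 + ε) with hw
  have hstep : smLoss A b ε (f + dd) ≤ smLoss A b ε f
      + 2 * ∑ m, (w m) * ((starRingEnd ℂ) (A.mulVec f m) * (A.mulVec dd m)).re
      + ∑ m, ‖A.mulVec dd m‖^2 := by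
    rw [smLoss, smLoss, Finset.mul_sum, ← Finset.sum_add_distrib, ← Finset.sum_add_distrib]
    refine Finset.sum_le_sum fun m _ => ?_
    have h := perM ε hε (b m) (hb m) (A.mulVec f m) (A.mulVec (f + dd) m)
    rw [hAfd m, add_sub_cancel_left, ← hAfd m] at h
    exact h
  have hC : ∑ m, ((w m : ℂ)) * ((starRingEnd ℂ) (A.mulVec f m) * (A.mulVec dd m))
      = ∑ n, (starRingEnd ℂ) (g n) * dd n := gradId A w (A.mulVec f) dd
  have hcross : ∑ m, (w m) * ((starRingEnd ℂ) (A.mulVec f m) * (A.mulVec dd m)).re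
      = -μ * S := by
    have e1 : ∑ m, (w m) * ((starRingEnd ℂ) (A.mulVec f m) * (A.mulVec dd m)).re
        = (∑ m, ((w m : ℂ)) * ((starRingEnd ℂ) (A.mulVec f m) * (A.mulVec dd m))).re := by
      rw [Complex.re_sum]
      exact Finset.sum_congr rfl fun m _ => (Complex.re_ofReal_mul _ _).symm
    rw [e1, hC]
    have e2 : ∀ n, (starRingEnd ℂ) (g n) * dd n = -((μ:ℂ) * ((‖g n‖^2 : ℝ) : ℂ)) := by
      intro n
      rw [hddn n]
      have h : (starRingEnd ℂ) (g n) * g n = ((‖g n‖^2 : ℝ) : ℂ) := by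
        rw [mul_comm]
        simp [Complex.mul_conj, Complex.normSq_eq_norm_sq]
      rw [← h]; ring
    rw [Finset.sum_congr rfl fun n _ => e2 n, Complex.re_sum, hS, neg_mul, Finset.mul_sum,
      ← Finset.sum_neg_distrib]
    refine Finset.sum_congr rfl fun n _ => ?_
    rw [← Complex.ofReal_mul, ← Complex.ofReal_neg, Complex.ofReal_re]
  have hcurv : ∑ m, ‖A.mulVec dd m‖^2 ≤ μ * S := by
    have hq := quadBound A dd
    rw [hddnorm, ← hL] at hq
    have : L * (μ^2 * S) = μ * S := by
      rw [hmu]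
      have hLne : L ≠ 0 := ne_of_gt hpos
      field_simp
    linarith [hq, this.le, this.ge]
  have hn2 : norm2 g ^ 2 = S := by
    rw [norm2, Real.sq_sqrt (Finset.sum_nonneg fun n _ => by positivity)]
  rw [hfd, hn2]
  linarith [hstep, hcurv, hcross]

end AWF
end
end

section
/- For all f, f⁺ ∈ ℂ^N, the (nonsmooth) amplitude loss satisfies the quadratic upper bound L(f⁺) ≤ L(f) + 2·Re⟨G(f), f⁺ − f⟩ + L̄·‖f⁺ − f‖₂², where G(f) = A^H(Af − b ⊙ sgn(Af)) is the generalized gradient, L̄ = λmax(A^H A), and Re⟨u,v⟩ = Re(Σ_n ū_n v_n). -/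
open scoped BigOperators
open Matrix

noncomputable section

namespace AWF

lemma conj_csgn_mul_self (z : ℂ) : (starRingEnd ℂ) (csgn z) * z = (‖z‖ : ℂ) := by
  unfold csgn
  by_cases h : z = 0
  · simp [h]
  · have habs : (‖z‖ : ℂ) ≠ 0 := by
      simpa using h
    rw [if_neg h, map_div₀, Complex.conj_ofReal, div_mul_eq_mul_div, Complex.conj_mul']
    field_simp

lemma abs_csgn_le (z : ℂ) : ‖csgn z‖ ≤ 1 := by
  unfold csgn
  by_cases h : z = 0
  · simp [h]
  · simp [h, norm_div]

lemma adj_identity {M N : ℕ} (A : Matrix (Fin M) (Fin N) ℂ) (w : Fin M → ℂ) (d : Fin N → ℂ) :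
    ∑ m, (starRingEnd ℂ) (w m) * (A *ᵥ d) m = ∑ n, (starRingEnd ℂ) ((Aᴴ *ᵥ w) n) * d n := by
  simp only [Matrix.mulVec, dotProduct, Matrix.conjTranspose_apply, map_sum, _root_.map_mul,
    Complex.conj_conj, Complex.star_def, Finset.mul_sum, Finset.sum_mul]
  rw [Finset.sum_comm]
  exact Finset.sum_congr rfl fun n _ => Finset.sum_congr rfl fun m _ => by ring

lemma spec_bound {M N : ℕ} (A : Matrix (Fin M) (Fin N) ℂ) (d : Fin N → ℂ) :
    ∑ m, ‖(A *ᵥ d) m‖ ^ 2 ≤ lamMax A * ∑ n, ‖d n‖ ^ 2 := by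
  rcases Nat.eq_zero_or_pos N with hN | hN
  · subst hN
    simp [Matrix.mulVec, dotProduct]
  · haveI : Nonempty (Fin N) := ⟨⟨0, hN⟩⟩
    set hH := Matrix.isHermitian_conjTranspose_mul_self A with hHdef
    set U : Matrix (Fin N) (Fin N) ℂ := (hH.eigenvectorUnitary : Matrix (Fin N) (Fin N) ℂ) with hU
    set e : Fin N → ℂ := Uᴴ *ᵥ d with he
    have hstar : star d ᵥ* U = star e := by
      rw [he, Matrix.star_mulVec, Matrix.conjTranspose_conjTranspose]
    have key1 : ∑ m, ‖(A *ᵥ d) m‖ ^ 2 = (star d ⬝ᵥ ((Aᴴ * A) *ᵥ d)).re := by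
      rw [← Matrix.mulVec_mulVec, Matrix.dotProduct_mulVec, ← Matrix.star_mulVec]
      simp [dotProduct, Complex.re_sum, Pi.star_apply, ← Complex.normSq_eq_norm_sq,
        Complex.mul_conj', Complex.normSq_apply]
    have key2 : (star d ⬝ᵥ ((Aᴴ * A) *ᵥ d)).re = ∑ j, hH.eigenvalues j * ‖e j‖ ^ 2 := by
      conv_lhs => rw [hH.spectral_theorem, Unitary.conjStarAlgAut_apply]
      rw [← hU, Matrix.star_eq_conjTranspose, ← Matrix.mulVec_mulVec, ← Matrix.mulVec_mulVec,
        ← he, Matrix.dotProduct_mulVec, hstar]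
      simp [dotProduct, Matrix.mulVec_diagonal, Complex.re_sum, ← Complex.normSq_eq_norm_sq,
        Complex.mul_conj']
      ring_nf
      refine Finset.sum_congr rfl fun j _ => ?_
      rw [Complex.normSq_apply]
      ring
    have key3 : ∑ j, ‖e j‖ ^ 2 = ∑ n, ‖d n‖ ^ 2 := by
      have h1 : star e ⬝ᵥ e = star d ⬝ᵥ d := by
        rw [← hstar, he, Matrix.dotProduct_mulVec, Matrix.vecMul_vecMul,
          ← Matrix.star_eq_conjTranspose U, (Matrix.mem_unitaryGroup_iff).mp hH.eigenvectorUnitary.2,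
          Matrix.vecMul_one]
      have := congrArg Complex.re h1
      simpa [dotProduct, Complex.re_sum, ← Complex.normSq_eq_norm_sq,
        Complex.mul_conj', Complex.normSq_apply] using this
    have key4 : ∀ j, hH.eigenvalues j ≤ lamMax A :=
      fun j => le_ciSup (Set.Finite.bddAbove (Set.finite_range _)) j
    calc ∑ m, ‖(A *ᵥ d) m‖ ^ 2 = ∑ j, hH.eigenvalues j * ‖e j‖ ^ 2 := by rw [key1, key2]
      _ ≤ ∑ j, lamMax A * ‖e j‖ ^ 2 :=
          Finset.sum_le_sum fun j _ => mul_le_mul_of_nonneg_right (key4 j) (by positivity)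
      _ = lamMax A * ∑ j, ‖e j‖ ^ 2 := by rw [Finset.mul_sum]
      _ = lamMax A * ∑ n, ‖d n‖ ^ 2 := by rw [key3]

lemma abs_sq (z : ℂ) : ‖z‖ ^ 2 = z.re ^ 2 + z.im ^ 2 := by
  rw [Complex.sq_norm, Complex.normSq_apply]; ring

lemma term_ineq (b : ℝ) (hb : 0 ≤ b) (y w : ℂ) :
    (b - ‖y + w‖) ^ 2
      ≤ (b - ‖y‖) ^ 2
        + 2 * ((starRingEnd ℂ) (y - (b : ℂ) * csgn y) * w).re + ‖w‖ ^ 2 := by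
  have h1 : ((starRingEnd ℂ) (csgn y) * (y + w)).re ≤ ‖y + w‖ := by
    calc ((starRingEnd ℂ) (csgn y) * (y + w)).re
        ≤ ‖(starRingEnd ℂ) (csgn y) * (y + w)‖ := Complex.re_le_norm _
      _ = ‖csgn y‖ * ‖y + w‖ := by
          rw [norm_mul, Complex.norm_conj]
      _ ≤ 1 * ‖y + w‖ :=
          mul_le_mul_of_nonneg_right (abs_csgn_le y) (norm_nonneg _)
      _ = ‖y + w‖ := one_mul _
  have hsq : ‖y + w‖ ^ 2
      = ‖y‖ ^ 2 + 2 * ((starRingEnd ℂ) y * w).re + ‖w‖ ^ 2 := by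
    rw [abs_sq, abs_sq, abs_sq]
    simp only [Complex.add_re, Complex.add_im, Complex.mul_re, Complex.conj_re, Complex.conj_im]
    ring
  have hrev : ((starRingEnd ℂ) (csgn y) * (y + w)).re
      = ‖y‖ + ((starRingEnd ℂ) (csgn y) * w).re := by
    rw [mul_add, Complex.add_re, conj_csgn_mul_self]
    simp
  have hexp : ((starRingEnd ℂ) (y - (b : ℂ) * csgn y) * w).re
      = ((starRingEnd ℂ) y * w).re - b * ((starRingEnd ℂ) (csgn y) * w).re := by
    simp only [map_sub, _root_.map_mul, Complex.conj_ofReal, sub_mul, Complex.sub_re, mul_assoc,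
      Complex.re_ofReal_mul]
  have h2 : 2 * b * ((starRingEnd ℂ) (csgn y) * (y + w)).re ≤ 2 * b * ‖y + w‖ :=
    mul_le_mul_of_nonneg_left h1 (by linarith)
  nlinarith [hsq, hrev, hexp, h2]

/-- Quadratic upper bound for the (nonsmooth) amplitude loss:
`L(f⁺) ≤ L(f) + 2 Re⟨G(f), f⁺ − f⟩ + L̄ ‖f⁺ − f‖₂²` with `L̄ = λmax(AᴴA)`. -/
theorem ampLoss_quadratic_upper_bound
    {M N : ℕ} (A : Matrix (Fin M) (Fin N) ℂ) (b : Fin M → ℝ) (hb : ∀ m, 0 ≤ b m)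
    (f fplus : Fin N → ℂ) :
    ampLoss A b fplus
      ≤ ampLoss A b f
        + 2 * (∑ n, (starRingEnd ℂ) (wGrad A b f n) * (fplus n - f n)).re
        + lamMax A * ∑ n, ‖fplus n - f n‖ ^ 2 := by
  set d : Fin N → ℂ := fplus - f with hd
  have hdapp : ∀ n, fplus n - f n = d n := fun n => rfl
  set w : Fin M → ℂ := A *ᵥ d with hw
  have hmv : A.mulVec fplus = fun m => A.mulVec f m + w m := by
    funext m
    have : fplus = f + d := by funext n; simp [hd]
    rw [this, Matrix.mulVec_add]
    rfl
  have step1 : ampLoss A b fplus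
      ≤ ampLoss A b f
        + 2 * (∑ m, ((starRingEnd ℂ) (A.mulVec f m - (b m : ℂ) * csgn (A.mulVec f m)) * w m).re)
        + ∑ m, ‖w m‖ ^ 2 := by
    unfold ampLoss
    rw [hmv, Finset.mul_sum, ← Finset.sum_add_distrib, ← Finset.sum_add_distrib]
    exact Finset.sum_le_sum fun m _ => by
      simpa [mul_comm] using term_ineq (b m) (hb m) (A.mulVec f m) (w m)
  have step2 : ∑ m, ((starRingEnd ℂ) (A.mulVec f m - (b m : ℂ) * csgn (A.mulVec f m)) * w m).re
      = (∑ n, (starRingEnd ℂ) (wGrad A b f n) * (fplus n - f n)).re := by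
    rw [← Complex.re_sum]
    exact congrArg Complex.re (adj_identity A _ d)
  have step3 : ∑ m, ‖w m‖ ^ 2 ≤ lamMax A * ∑ n, ‖fplus n - f n‖ ^ 2 :=
    spec_bound A d
  calc ampLoss A b fplus
      ≤ ampLoss A b f
        + 2 * (∑ m, ((starRingEnd ℂ) (A.mulVec f m - (b m : ℂ) * csgn (A.mulVec f m)) * w m).re)
        + ∑ m, ‖w m‖ ^ 2 := step1
    _ ≤ ampLoss A b f
        + 2 * (∑ n, (starRingEnd ℂ) (wGrad A b f n) * (fplus n - f n)).re
        + lamMax A * ∑ n, ‖fplus n - f n‖ ^ 2 := by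
        rw [step2]
        exact add_le_add_right step3 _

end AWF
end
end
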